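/- Let H = ⟨(1 2 3)⟩ ≤ Sym({1,2,3}) and let G = H wr D₈ act in product action on {1,2,3}⁴, where D₈ ≤ Sym(4) is the dihedral group of order 8 preserving the block system {{1,2},{3,4}}. Then G has exactly three minimal normal subgroups, namely M₁ = {(x,x,x,x) : x ∈ H}, M₂ = {(x,x,x²,x²) : x ∈ H}, and M₃ = {(x,x²,y,y²) : x,y ∈ H}; in particular G is not quasiprimitive on {1,2,3}⁴ even though each component G^Γ = H is quasiprimitive. -/

import Mathlib

open scoped Pointwise

namespace QP

variable {Ω : Type*}

/-- `P` is a partition of `Ω`. -/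
def IsPartition (P : Set (Set Ω)) : Prop :=
  ∅ ∉ P ∧ ∀ ω : Ω, ∃! b : Set Ω, b ∈ P ∧ ω ∈ b

/-- A proper partition: neither `{Ω}` nor the partition into singletons. -/
def IsProperPartition (P : Set (Set Ω)) : Prop :=
  IsPartition P ∧ P ≠ {Set.univ} ∧ ¬ ∀ b ∈ P, ∃ ω : Ω, b = {ω}

/-- The pointwise stabiliser of the partition `P` (kernel of the action on `P`),
as a subgroup of `Sym(Ω)`: the permutations fixing every block of `P` setwise. -/
def partKernel (P : Set (Set Ω)) : Subgroup (Equiv.Perm Ω) where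
  carrier := {g | ∀ b ∈ P, g • b = b}
  one_mem' := by intro b hb; simp
  mul_mem' := by
    intro g h hg hh b hb
    rw [mul_smul, hh b hb, hg b hb]
  inv_mem' := by
    intro g hg b hb
    rw [inv_smul_eq_iff, hg b hb]

/-- The setwise stabiliser of a partition `P` in `Sym(Ω)`. -/
def partStab (P : Set (Set Ω)) : Subgroup (Equiv.Perm Ω) :=
  MulAction.stabilizer (Equiv.Perm Ω) P

/-- The permutation of the set of blocks of `P` induced by an element of
the stabiliser of `P`. -/
noncomputable def blockPerm (P : Set (Set Ω)) (g : ↥(partStab P)) : Equiv.Perm ↥P where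
  toFun b := ⟨(g : Equiv.Perm Ω) • (b : Set Ω), by
    have h1 : (g : Equiv.Perm Ω) • (b : Set Ω) ∈ (g : Equiv.Perm Ω) • P :=
      Set.smul_mem_smul_set b.2
    rwa [g.2] at h1⟩
  invFun b := ⟨(g : Equiv.Perm Ω)⁻¹ • (b : Set Ω), by
    have h0 : (g : Equiv.Perm Ω) • P = P := g.2
    have h2 : ((g : Equiv.Perm Ω)⁻¹) • P = P := by
      rw [inv_smul_eq_iff, h0]
    have h1 : (g : Equiv.Perm Ω)⁻¹ • (b : Set Ω) ∈ (g : Equiv.Perm Ω)⁻¹ • P :=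
      Set.smul_mem_smul_set b.2
    rwa [h2] at h1⟩
  left_inv b := by
    apply Subtype.ext
    simp
  right_inv b := by
    apply Subtype.ext
    simp

/-- The homomorphism from the stabiliser of a partition `P` to the symmetric
group on the set of blocks of `P`. -/
noncomputable def componentHom (P : Set (Set Ω)) : ↥(partStab P) →* Equiv.Perm ↥P where
  toFun := blockPerm P
  map_one' := by
    apply Equiv.ext; intro b
    apply Subtype.ext
    simp [blockPerm]
  map_mul' := by
    intro g h
    apply Equiv.ext; intro b
    apply Subtype.ext
    simp [blockPerm, mul_smul]

/-- The component `G^P` of `G` on a partition `P` : the permutation group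
induced on the set of blocks of `P` by the setwise stabiliser of `P` in `G`. -/
noncomputable def component (G : Subgroup (Equiv.Perm Ω)) (P : Set (Set Ω)) :
    Subgroup (Equiv.Perm ↥P) :=
  Subgroup.map (componentHom P) (G.subgroupOf (partStab P))

section abstr
variable {X : Type*} [Group X]

/-- `N` is a normal subgroup of the (sub)group `G`. -/
def IsNormalIn (N G : Subgroup X) : Prop :=
  N ≤ G ∧ ∀ g ∈ G, ∀ n ∈ N, g * n * g⁻¹ ∈ N

/-- `N` is a minimal normal subgroup of `G`. -/
def IsMinimalNormalIn (N G : Subgroup X) : Prop :=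
  IsNormalIn N G ∧ N ≠ ⊥ ∧
    ∀ K : Subgroup X, IsNormalIn K G → K ≠ ⊥ → K ≤ N → K = N

/-- The socle of `G`: the subgroup generated by all minimal normal subgroups. -/
def socle (G : Subgroup X) : Subgroup X :=
  ⨆ N ∈ {N : Subgroup X | IsMinimalNormalIn N G}, N

/-- `M` is the internal direct product of the family `N` of subgroups. -/
def IsInternalDirectProductOver {ι : Type*} (M : Subgroup X) (N : ι → Subgroup X) : Prop :=
  (∀ i, N i ≤ M) ∧
  (∀ i j, i ≠ j → ∀ x ∈ N i, ∀ y ∈ N j, Commute x y) ∧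
  (⨆ i, N i) = M ∧
  (∀ i, N i ⊓ (⨆ j ∈ ({i}ᶜ : Set ι), N j) = ⊥)

end abstr

/-- A transitive permutation group on `α`. -/
def IsTransitivePerm {α : Type*} (H : Subgroup (Equiv.Perm α)) : Prop :=
  ∀ a b : α, ∃ g ∈ H, g a = b

/-- A regular permutation group: transitive with trivial point stabilisers. -/
def IsRegularPerm {α : Type*} (H : Subgroup (Equiv.Perm α)) : Prop :=
  IsTransitivePerm H ∧ ∀ g ∈ H, ∀ a : α, g a = a → g = 1

/-- A semiregular permutation group: all point stabilisers are trivial. -/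
def IsSemiregularPerm {α : Type*} (H : Subgroup (Equiv.Perm α)) : Prop :=
  ∀ g ∈ H, ∀ a : α, g a = a → g = 1

/-- A quasiprimitive permutation group: transitive, and every nontrivial
normal subgroup is transitive. -/
def IsQuasiprimitivePerm {α : Type*} (H : Subgroup (Equiv.Perm α)) : Prop :=
  IsTransitivePerm H ∧
    ∀ N : Subgroup (Equiv.Perm α), IsNormalIn N H → N ≠ ⊥ → IsTransitivePerm N

section indexed

variable {ι : Type*}

/-- A Cartesian decomposition, indexed form: a family of pairwise distinct
proper partitions such that any choice of blocks, one from each partition,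
intersects in exactly one point. -/
def IsCartesianDecomp (Γ : ι → Set (Set Ω)) : Prop :=
  (∀ i, IsProperPartition (Γ i)) ∧ Function.Injective Γ ∧
  ∀ c : ι → Set Ω, (∀ i, c i ∈ Γ i) → ∃! ω : Ω, ∀ i, ω ∈ c i

/-- The Cartesian decomposition `Γ` is `M`-normal, with `N i` playing the
role of `M^{Γ i}`: each partition is `M`-invariant, `M` is the internal direct
product of the `N i`, each `N i` acts faithfully on `Γ i`, and
`∏_{j ≠ i} N j` is the kernel of the `M`-action on `Γ i`. -/
structure IsNormalDecomp (M : Subgroup (Equiv.Perm Ω)) (Γ : ι → Set (Set Ω))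
    (N : ι → Subgroup (Equiv.Perm Ω)) : Prop where
  invariant : ∀ i, ∀ g ∈ M, ∀ b ∈ Γ i, g • b ∈ Γ i
  product : IsInternalDirectProductOver M N
  faithful : ∀ i, N i ⊓ partKernel (Γ i) = ⊥
  kernel : ∀ i, M ⊓ partKernel (Γ i) = ⨆ j ∈ ({i}ᶜ : Set ι), N j

end indexed

section setbased

/-- A Cartesian decomposition, as a (finite) set of proper partitions. -/
def IsCartesianDecompSet (E : Set (Set (Set Ω))) : Prop :=
  E.Finite ∧ (∀ P ∈ E, IsProperPartition P) ∧
  ∀ c : Set (Set Ω) → Set Ω, (∀ P ∈ E, c P ∈ P) → ∃! ω : Ω, ∀ P ∈ E, ω ∈ c P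

/-- `E` is a homogeneous Cartesian decomposition: all partitions have the same size. -/
def IsHomogeneous (E : Set (Set (Set Ω))) : Prop :=
  ∀ P ∈ E, ∀ Q ∈ E, Nat.card ↥P = Nat.card ↥Q

/-- `E` is invariant under `G`: `G` permutes the partitions in `E`. -/
def InvariantDec (G : Subgroup (Equiv.Perm Ω)) (E : Set (Set (Set Ω))) : Prop :=
  ∀ g ∈ G, ∀ P ∈ E, g • P ∈ E

/-- `G` is transitive on `E`. -/
def TransitiveOnDec (G : Subgroup (Equiv.Perm Ω)) (E : Set (Set (Set Ω))) : Prop :=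
  ∀ P ∈ E, ∀ Q ∈ E, ∃ g ∈ G, g • P = Q

/-- The Cartesian decomposition `E` is `M`-normal: `M` fixes each partition
in `E` setwise, and `M` is the internal direct product of subgroups `N P`
(`P ∈ E`), where `∏_{Q ≠ P} N Q` is the kernel of the `M`-action on `P`. -/
def IsNormalDecompSet (M : Subgroup (Equiv.Perm Ω)) (E : Set (Set (Set Ω))) : Prop :=
  (∀ g ∈ M, ∀ P ∈ E, g • P = P) ∧
  ∃ N : Set (Set Ω) → Subgroup (Equiv.Perm Ω),
    (∀ P ∈ E, N P ≤ M) ∧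
    (∀ P Q, P ∈ E → Q ∈ E → P ≠ Q → ∀ x ∈ N P, ∀ y ∈ N Q, Commute x y) ∧
    (⨆ P ∈ E, N P) = M ∧
    (∀ P ∈ E, N P ⊓ (⨆ Q ∈ E \ {P}, N Q) = ⊥) ∧
    (∀ P ∈ E, M ⊓ partKernel P = ⨆ Q ∈ E \ {P}, N Q)

/-- `E` is a blow-up decomposition for `G`: a `G`-invariant Cartesian
decomposition on which `G` acts transitively, which is `M`-normal for some
transitive normal subgroup `M` of `G` such that `M^Γ = Soc(G^Γ)` for every
`Γ ∈ E`. -/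
def IsBlowUpDecomp (G : Subgroup (Equiv.Perm Ω)) (E : Set (Set (Set Ω))) : Prop :=
  IsCartesianDecompSet E ∧ InvariantDec G E ∧ TransitiveOnDec G E ∧
  ∃ M : Subgroup (Equiv.Perm Ω), IsNormalIn M G ∧ IsTransitivePerm M ∧
    IsNormalDecompSet M E ∧ ∀ P ∈ E, component M P = socle (component G P)

end setbased

end QP
namespace QP

section Wreath

variable (K : Type*) [Group K] (ℓ : ℕ)

/-- The coordinate-permuting action of `Sym(ℓ)` on `K^ℓ`, as automorphisms. -/
def permCoord : Equiv.Perm (Fin ℓ) →* MulAut (Fin ℓ → K) where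
  toFun σ :=
    { toFun := fun f => f ∘ σ.symm
      invFun := fun f => f ∘ σ
      left_inv := fun f => by funext i; simp
      right_inv := fun f => by funext i; simp
      map_mul' := fun f g => rfl }
  map_one' := by
    apply MulEquiv.ext; intro f; rfl
  map_mul' := by
    intro σ τ
    apply MulEquiv.ext; intro f; rfl

/-- The wreath product `K wr Sym(ℓ) = K^ℓ ⋊ Sym(ℓ)`. -/
abbrev WreathProduct := (Fin ℓ → K) ⋊[permCoord K ℓ] Equiv.Perm (Fin ℓ)

variable (Γ : Type*) [MulAction K Γ]

/-- The product action of the wreath product `K wr Sym(ℓ)` on `Γ^ℓ`,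
where `K` acts on `Γ`. -/
def prodAction : WreathProduct K ℓ →* Equiv.Perm (Fin ℓ → Γ) where
  toFun w :=
    { toFun := fun v i => w.left i • v (w.right.symm i)
      invFun := fun v i => (w.left (w.right i))⁻¹ • v (w.right i)
      left_inv := fun v => by funext i; simp
      right_inv := fun v => by funext i; simp }
  map_one' := by
    apply Equiv.ext; intro v; funext i; simp; rfl
  map_mul' := by
    intro w₁ w₂
    apply Equiv.ext; intro v; funext i
    simp only [SemidirectProduct.mul_left, SemidirectProduct.mul_right, Pi.mul_apply,
      mul_smul, permCoord, MonoidHom.coe_mk, OneHom.coe_mk, MulEquiv.coe_mk,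
      Equiv.coe_fn_mk, Function.comp_apply, Equiv.coe_fn_symm_mk, Equiv.Perm.mul_def,
      Equiv.symm_trans_apply, Equiv.trans_apply]

end Wreath

section Reg

variable (Λ : Type*) [Group Λ]

/-- The right regular representation of a group. -/
def rightReg : Λ →* Equiv.Perm Λ :=
  MonoidHom.mk' (fun g => Equiv.mulRight g⁻¹) (by
    intro a b; ext x; simp [mul_assoc])

/-- The left regular representation of a group. -/
def leftReg : Λ →* Equiv.Perm Λ :=
  MonoidHom.mk' (fun g => Equiv.mulLeft g) (by
    intro a b; ext x; simp [mul_assoc])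

/-- The diagonal embedding of `K` into `K^ℓ`. -/
def constHom (K : Type*) [Group K] (ℓ : ℕ) : K →* (Fin ℓ → K) :=
  MonoidHom.mk' (fun h => fun _ => h) (fun _ _ => rfl)

end Reg

section Sub

variable {Γ : Type*} (H : Subgroup (Equiv.Perm Γ)) (ℓ : ℕ)

/-- The product action of `H wr Sym(ℓ)` on `Γ^ℓ`, for `H ≤ Sym(Γ)`. -/
def wrAction : WreathProduct ↥H ℓ →* Equiv.Perm (Fin ℓ → Γ) :=
  prodAction ↥H ℓ Γ

/-- The subgroup `A^ℓ` of the base group of `H wr Sym(ℓ)`, for `A ≤ H`. -/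
def baseSub (A : Subgroup (Equiv.Perm Γ)) : Subgroup (WreathProduct ↥H ℓ) :=
  Subgroup.map SemidirectProduct.inl (Subgroup.pi Set.univ fun _ => A.subgroupOf H)

/-- The diagonal copy `Hδ` of `H` in the base group of `H wr Sym(ℓ)`. -/
def diagSub : Subgroup (WreathProduct ↥H ℓ) :=
  (SemidirectProduct.inl.comp (constHom ↥H ℓ)).range

/-- The top group `Sym(ℓ)` of `H wr Sym(ℓ)`. -/
def topSub : Subgroup (WreathProduct ↥H ℓ) :=
  SemidirectProduct.inr.range

end Sub

end QP

namespace Ex14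

/-- The 3-cycle (1 2 3). -/
def c : Equiv.Perm (Fin 3) := finRotate 3

/-- H = ⟨(1 2 3)⟩ ≤ Sym({1,2,3}). -/
def H : Subgroup (Equiv.Perm (Fin 3)) := Subgroup.zpowers c

def zc : ↥H := ⟨c, Subgroup.mem_zpowers c⟩

/-- D₈ ≤ Sym(4): the (dihedral, of order 8) stabiliser of the
block system {{1,2},{3,4}}. -/
def D : Subgroup (Equiv.Perm (Fin 4)) :=
  MulAction.stabilizer (Equiv.Perm (Fin 4)) ({{0, 1}, {2, 3}} : Set (Set (Fin 4)))

/-- The product action of H wr Sym(4) on {1,2,3}⁴. -/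
def ψ : QP.WreathProduct ↥H 4 →* Equiv.Perm (Fin 4 → Fin 3) := QP.wrAction H 4

/-- G = H wr D₈ in product action on {1,2,3}⁴. -/
def G : Subgroup (Equiv.Perm (Fin 4 → Fin 3)) :=
  Subgroup.map ψ (Subgroup.comap SemidirectProduct.rightHom D)

/-- M₁ = {(x,x,x,x) : x ∈ H}. -/
def M₁ : Subgroup (Equiv.Perm (Fin 4 → Fin 3)) :=
  Subgroup.closure {ψ (SemidirectProduct.inl fun _ => zc)}

/-- M₂ = {(x,x,x²,x²) : x ∈ H}  (note x² = x⁻¹ in H). -/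
def M₂ : Subgroup (Equiv.Perm (Fin 4 → Fin 3)) :=
  Subgroup.closure {ψ (SemidirectProduct.inl ![zc, zc, zc⁻¹, zc⁻¹])}

/-- M₃ = {(x,x²,y,y²) : x, y ∈ H}. -/
def M₃ : Subgroup (Equiv.Perm (Fin 4 → Fin 3)) :=
  Subgroup.closure
    {ψ (SemidirectProduct.inl ![zc, zc⁻¹, 1, 1]),
     ψ (SemidirectProduct.inl ![1, 1, zc, zc⁻¹])}

/-- The natural Cartesian decomposition of {1,2,3}⁴: the i-th partition consists
of the fibres of the i-th coordinate. -/
def coordPart (i : Fin 4) : Set (Set (Fin 4 → Fin 3)) :=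
  {b | ∃ γ : Fin 3, b = {v : Fin 4 → Fin 3 | v i = γ}}

end Ex14

namespace Ex14

abbrev V := Fin 4 → Fin 3

/-- Translation by `n`. -/
def T (n : V) : Equiv.Perm V := Equiv.addRight n

/-- Coordinate permutation. -/
def Pi' (σ : Equiv.Perm (Fin 4)) : Equiv.Perm V :=
  Equiv.arrowCongr σ (Equiv.refl (Fin 3))

@[simp] lemma T_apply (n v : V) : T n v = v + n := rfl
@[simp] lemma Pi'_apply (σ : Equiv.Perm (Fin 4)) (v : V) : Pi' σ v = v ∘ σ.symm := rfl

lemma T_mul (a b : V) : T a * T b = T (a + b) := by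
  ext v; simp [T, add_comm, add_assoc, add_left_comm]

@[simp] lemma T_zero : T 0 = 1 := by ext v; simp [T]

lemma T_inj : Function.Injective T := by
  intro a b h
  have := congrArg (fun e : Equiv.Perm V => e 0) h
  simpa [T] using this

lemma T_pow (a : V) (m : ℕ) : T a ^ m = T (m • a) := by
  induction m with
  | zero => simp
  | succ k ih => rw [pow_succ, ih, T_mul, succ_nsmul]

lemma T_inv (a : V) : (T a)⁻¹ = T (-a) := by
  apply inv_eq_of_mul_eq_one_right; rw [T_mul, add_neg_cancel, T_zero]

lemma Pi'_mul (σ τ : Equiv.Perm (Fin 4)) : Pi' σ * Pi' τ = Pi' (σ * τ) := by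
  ext v; simp [Pi', Function.comp]; rfl

@[simp] lemma Pi'_one : Pi' 1 = 1 := by ext v; simp [Pi']; rfl

lemma Pi'_inv (σ : Equiv.Perm (Fin 4)) : (Pi' σ)⁻¹ = Pi' σ⁻¹ := by
  apply inv_eq_of_mul_eq_one_right; rw [Pi'_mul, mul_inv_cancel, Pi'_one]

lemma Pi'_T (σ : Equiv.Perm (Fin 4)) (n : V) :
    Pi' σ * T n = T (n ∘ σ.symm) * Pi' σ := by
  apply Equiv.ext; intro v; funext i
  simp [T, Pi', Function.comp, Equiv.Perm.mul_apply]

lemma conj_T (n m : V) (σ : Equiv.Perm (Fin 4)) :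
    (T n * Pi' σ) * T m * (T n * Pi' σ)⁻¹ = T (m ∘ σ.symm) := by
  rw [mul_inv_rev, Pi'_inv, T_inv, mul_assoc (T n) (Pi' σ) (T m), Pi'_T,
    ← mul_assoc, ← mul_assoc, T_mul, mul_assoc, mul_assoc, ← mul_assoc (Pi' σ),
    Pi'_mul, mul_inv_cancel, Pi'_one, one_mul, T_mul]
  congr 1
  abel

end Ex14

namespace Ex14

lemma c_apply (x : Fin 3) : c x = x + 1 := by
  revert x; decide

lemma H_translation : ∀ h ∈ H, ∀ x : Fin 3, h x = x + h 0 := by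
  intro h hh
  rw [H, Subgroup.zpowers_eq_closure] at hh
  induction hh using Subgroup.closure_induction with
  | mem g hg =>
      rcases hg with rfl
      intro x; rw [c_apply, c_apply, zero_add]
  | one => intro x; simp
  | mul g k _ _ hg hk =>
      intro x
      rw [Equiv.Perm.mul_apply, Equiv.Perm.mul_apply, hg (k x), hk x, hg (k 0), hk 0]
      abel
  | inv g _ hg =>
      intro x
      have h1 : g⁻¹ x + g 0 = x := by rw [← hg (g⁻¹ x)]; simp
      have h2 : g⁻¹ 0 + g 0 = 0 := by rw [← hg (g⁻¹ 0)]; simp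
      rw [eq_sub_of_add_eq h1, eq_sub_of_add_eq h2]
      abel

end Ex14

namespace Ex14

lemma cpow0 : ∀ k : Fin 3, (c ^ k.val) 0 = k := by decide

lemma psi_eq (w : QP.WreathProduct ↥H 4) :
    ψ w = T (fun i => (w.left i : Equiv.Perm (Fin 3)) 0) * Pi' w.right := by
  apply Equiv.ext; intro v; funext i
  have h1 : ψ w v i = (w.left i : Equiv.Perm (Fin 3)) (v (w.right.symm i)) := rfl
  rw [h1, H_translation _ (w.left i).2]
  rfl

lemma memG_iff (g : Equiv.Perm V) : g ∈ G ↔ ∃ n σ, σ ∈ D ∧ g = T n * Pi' σ := by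
  constructor
  · rintro ⟨w, hw, rfl⟩
    exact ⟨_, w.right, hw, psi_eq w⟩
  · rintro ⟨n, σ, hσ, rfl⟩
    refine ⟨⟨fun i => ⟨c ^ (n i).val, pow_mem (Subgroup.mem_zpowers c) _⟩, σ⟩, hσ, ?_⟩
    rw [psi_eq]
    congr 1
    exact congrArg T (funext fun i => cpow0 (n i))

lemma T_mem_G (n : V) : T n ∈ G := by
  rw [memG_iff]; exact ⟨n, 1, one_mem D, by rw [Pi'_one, mul_one]⟩

-- generators
lemma gen1_eq : ψ (SemidirectProduct.inl fun _ => zc) = T (fun _ => 1) := by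
  rw [psi_eq]
  simp only [SemidirectProduct.left_inl, SemidirectProduct.right_inl, Pi'_one, mul_one]
  congr 1

lemma zc_inv_coe : ((zc⁻¹ : ↥H) : Equiv.Perm (Fin 3)) = c⁻¹ := rfl

lemma gen2_eq : ψ (SemidirectProduct.inl ![zc, zc, zc⁻¹, zc⁻¹]) = T ![1, 1, 2, 2] := by
  rw [psi_eq]
  simp only [SemidirectProduct.left_inl, SemidirectProduct.right_inl, Pi'_one, mul_one]
  congr 1
  funext i
  fin_cases i <;> decide

lemma gen3a_eq : ψ (SemidirectProduct.inl ![zc, zc⁻¹, 1, 1]) = T ![1, 2, 0, 0] := by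
  rw [psi_eq]
  simp only [SemidirectProduct.left_inl, SemidirectProduct.right_inl, Pi'_one, mul_one]
  congr 1
  funext i
  fin_cases i <;> decide

lemma gen3b_eq : ψ (SemidirectProduct.inl ![1, 1, zc, zc⁻¹]) = T ![0, 0, 1, 2] := by
  rw [psi_eq]
  simp only [SemidirectProduct.left_inl, SemidirectProduct.right_inl, Pi'_one, mul_one]
  congr 1
  funext i
  fin_cases i <;> decide

end Ex14

namespace Ex14

/-- constant vectors -/
def w1 (k : Fin 3) : V := fun _ => k
/-- (k,k,-k,-k) -/
def w2 (k : Fin 3) : V := ![k, k, -k, -k]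
/-- (x,-x,y,-y) -/
def w3 (x y : Fin 3) : V := ![x, -x, y, -y]

lemma w1_add : ∀ k l : Fin 3, w1 k + w1 l = w1 (k + l) := by decide
lemma w1_neg : ∀ k : Fin 3, -(w1 k) = w1 (-k) := by decide
lemma w1_zero : w1 0 = 0 := by decide
lemma w2_add : ∀ k l : Fin 3, w2 k + w2 l = w2 (k + l) := by decide
lemma w2_neg : ∀ k : Fin 3, -(w2 k) = w2 (-k) := by decide
lemma w2_zero : w2 0 = 0 := by decide
lemma w3_add : ∀ x y x' y' : Fin 3, w3 x y + w3 x' y' = w3 (x + x') (y + y') := by decide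
lemma w3_neg : ∀ x y : Fin 3, -(w3 x y) = w3 (-x) (-y) := by decide
lemma w3_zero : w3 0 0 = 0 := by decide

lemma w1_gen : ∀ k : Fin 3, k ≠ 0 → ∀ l, ∃ p : Fin 3, p.val • w1 k = w1 l := by decide
lemma w2_gen : ∀ k : Fin 3, k ≠ 0 → ∀ l, ∃ p : Fin 3, p.val • w2 k = w2 l := by decide
lemma w3_gen : ∀ z : Fin 3, z ≠ 0 → ∀ x y, ∃ p q : Fin 3,
    p.val • w3 z 0 + q.val • w3 0 z = w3 x y := by decide

lemma w1_smul : ∀ k : Fin 3, k.val • w1 1 = w1 k := by decide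
lemma w2_eq : (![1, 1, 2, 2] : V) = w2 1 := by decide
lemma w3a_eq : (![1, 2, 0, 0] : V) = w3 1 0 := by decide
lemma w3b_eq : (![0, 0, 1, 2] : V) = w3 0 1 := by decide

lemma memM₁ (g : Equiv.Perm V) : g ∈ M₁ ↔ ∃ k : Fin 3, g = T (w1 k) := by
  constructor
  · intro hg
    induction hg using Subgroup.closure_induction with
    | mem x hx =>
        rw [Set.mem_singleton_iff] at hx
        exact ⟨1, by rw [hx, gen1_eq]; rfl⟩
    | one => exact ⟨0, by rw [w1_zero, T_zero]⟩
    | mul a b _ _ ha hb =>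
        obtain ⟨k, rfl⟩ := ha; obtain ⟨l, rfl⟩ := hb
        exact ⟨k + l, by rw [T_mul, w1_add]⟩
    | inv a _ ha =>
        obtain ⟨k, rfl⟩ := ha
        exact ⟨-k, by rw [T_inv, w1_neg]⟩
  · rintro ⟨k, rfl⟩
    have h1 : T (w1 1) ∈ M₁ := by
      rw [show w1 1 = (fun _ => (1 : Fin 3)) from rfl, ← gen1_eq]
      exact Subgroup.subset_closure (Set.mem_singleton _)
    have h2 := pow_mem h1 k.val
    rwa [T_pow, w1_smul] at h2

lemma memM₂ (g : Equiv.Perm V) : g ∈ M₂ ↔ ∃ k : Fin 3, g = T (w2 k) := by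
  constructor
  · intro hg
    induction hg using Subgroup.closure_induction with
    | mem x hx =>
        rw [Set.mem_singleton_iff] at hx
        exact ⟨1, by rw [hx, gen2_eq, w2_eq]⟩
    | one => exact ⟨0, by rw [w2_zero, T_zero]⟩
    | mul a b _ _ ha hb =>
        obtain ⟨k, rfl⟩ := ha; obtain ⟨l, rfl⟩ := hb
        exact ⟨k + l, by rw [T_mul, w2_add]⟩
    | inv a _ ha =>
        obtain ⟨k, rfl⟩ := ha
        exact ⟨-k, by rw [T_inv, w2_neg]⟩
  · rintro ⟨k, rfl⟩
    have h1 : T (w2 1) ∈ M₂ := by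
      rw [← w2_eq, ← gen2_eq]; exact Subgroup.subset_closure (Set.mem_singleton _)
    obtain ⟨p, hp⟩ := w2_gen 1 (by decide) k
    have h2 := pow_mem h1 p.val
    rwa [T_pow, hp] at h2

lemma M₃_gen_mem : T (w3 1 0) ∈ M₃ ∧ T (w3 0 1) ∈ M₃ := by
  constructor
  · rw [← w3a_eq, ← gen3a_eq]
    exact Subgroup.subset_closure (Set.mem_insert _ _)
  · rw [← w3b_eq, ← gen3b_eq]
    exact Subgroup.subset_closure (Set.mem_insert_of_mem _ (Set.mem_singleton _))

lemma memM₃ (g : Equiv.Perm V) : g ∈ M₃ ↔ ∃ x y : Fin 3, g = T (w3 x y) := by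
  constructor
  · intro hg
    induction hg using Subgroup.closure_induction with
    | mem x hx =>
        rcases Set.mem_insert_iff.mp hx with h | h
        · exact ⟨1, 0, by rw [h, gen3a_eq, w3a_eq]⟩
        · rw [Set.mem_singleton_iff] at h
          exact ⟨0, 1, by rw [h, gen3b_eq, w3b_eq]⟩
    | one => exact ⟨0, 0, by rw [w3_zero, T_zero]⟩
    | mul a b _ _ ha hb =>
        obtain ⟨x, y, rfl⟩ := ha; obtain ⟨x', y', rfl⟩ := hb
        exact ⟨x + x', y + y', by rw [T_mul, w3_add]⟩
    | inv a _ ha =>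
        obtain ⟨x, y, rfl⟩ := ha
        exact ⟨-x, -y, by rw [T_inv, w3_neg]⟩
  · rintro ⟨x, y, rfl⟩
    obtain ⟨p, q, hpq⟩ := w3_gen 1 (by decide) x y
    have h2 := mul_mem (pow_mem M₃_gen_mem.1 p.val) (pow_mem M₃_gen_mem.2 q.val)
    rwa [T_pow, T_pow, T_mul, hpq] at h2

end Ex14

namespace Ex14

open Equiv

lemma smul_pair (σ : Equiv.Perm (Fin 4)) (a b : Fin 4) :
    σ • ({a, b} : Set (Fin 4)) = {σ a, σ b} := by
  rw [Set.smul_set_insert, Set.smul_set_singleton]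
  rfl

lemma D_blocks {σ : Equiv.Perm (Fin 4)} (hσ : σ ∈ D) :
    (({σ 0, σ 1} : Set (Fin 4)) = {0, 1} ∧ ({σ 2, σ 3} : Set (Fin 4)) = {2, 3}) ∨
    (({σ 0, σ 1} : Set (Fin 4)) = {2, 3} ∧ ({σ 2, σ 3} : Set (Fin 4)) = {0, 1}) := by
  have hP : σ • ({{0, 1}, {2, 3}} : Set (Set (Fin 4))) = {{0, 1}, {2, 3}} := hσ
  have h01 : σ • ({0, 1} : Set (Fin 4)) ∈ ({{0, 1}, {2, 3}} : Set (Set (Fin 4))) := by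
    rw [← hP]; exact Set.smul_mem_smul_set (Set.mem_insert _ _)
  have h23 : σ • ({2, 3} : Set (Fin 4)) ∈ ({{0, 1}, {2, 3}} : Set (Set (Fin 4))) := by
    rw [← hP]; exact Set.smul_mem_smul_set (Set.mem_insert_of_mem _ (Set.mem_singleton _))
  rw [smul_pair] at h01 h23
  rcases Set.mem_insert_iff.mp h01 with h1 | h1 <;>
    rcases Set.mem_insert_iff.mp h23 with h2 | h2
  · -- both blocks map to {0,1}: contradiction
    exfalso
    have : σ 2 ∈ ({σ 0, σ 1} : Set (Fin 4)) := by
      rw [h1, ← h2]; exact Set.mem_insert _ _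
    rcases this with h | h
    · exact absurd (σ.injective h) (by decide)
    · exact absurd (σ.injective h) (by decide)
  · rw [Set.mem_singleton_iff] at h2
    exact Or.inl ⟨h1, h2⟩
  · rw [Set.mem_singleton_iff] at h1
    exact Or.inr ⟨h1, h2⟩
  · exfalso
    rw [Set.mem_singleton_iff] at h1 h2
    have : σ 2 ∈ ({σ 0, σ 1} : Set (Fin 4)) := by
      rw [h1, ← h2]; exact Set.mem_insert _ _
    rcases this with h | h
    · exact absurd (σ.injective h) (by decide)
    · exact absurd (σ.injective h) (by decide)

/-- the module membership predicates -/
lemma P1_iff (m : V) : (∃ k, m = w1 k) ↔ m 0 = m 1 ∧ m 1 = m 2 ∧ m 2 = m 3 := by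
  constructor
  · rintro ⟨k, rfl⟩; exact ⟨rfl, rfl, rfl⟩
  · rintro ⟨h1, h2, h3⟩
    refine ⟨m 0, funext fun i => ?_⟩
    fin_cases i
    · rfl
    · exact h1.symm
    · exact (h1.trans h2).symm
    · exact ((h1.trans h2).trans h3).symm

lemma P2_iff (m : V) : (∃ k, m = w2 k) ↔ m 0 = m 1 ∧ m 2 = m 3 ∧ m 0 + m 2 = 0 := by
  constructor
  · rintro ⟨k, rfl⟩
    revert k; decide
  · rintro ⟨h1, h2, h3⟩
    have h4 : m 2 = -(m 0) := (neg_eq_of_add_eq_zero_right h3).symm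
    refine ⟨m 0, funext fun i => ?_⟩
    fin_cases i
    · rfl
    · exact h1.symm
    · exact h4
    · exact h2.symm.trans h4

lemma P3_iff (m : V) : (∃ x y, m = w3 x y) ↔ m 0 + m 1 = 0 ∧ m 2 + m 3 = 0 := by
  constructor
  · rintro ⟨x, y, rfl⟩
    revert x y; decide
  · rintro ⟨h1, h2⟩
    have h3 : m 1 = -(m 0) := (neg_eq_of_add_eq_zero_right h1).symm
    have h4 : m 3 = -(m 2) := (neg_eq_of_add_eq_zero_right h2).symm
    refine ⟨m 0, m 2, funext fun i => ?_⟩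
    fin_cases i
    · rfl
    · exact h3
    · rfl
    · exact h4

lemma mem_pair_01 {j : Fin 4} (h : j ∈ ({0, 1} : Set (Fin 4))) : j = 0 ∨ j = 1 := h
lemma mem_pair_23 {j : Fin 4} (h : j ∈ ({2, 3} : Set (Fin 4))) : j = 2 ∨ j = 3 := h

lemma w1_comp {σ : Equiv.Perm (Fin 4)} (_ : σ ∈ D) (k : Fin 3) :
    w1 k ∘ σ = w1 k := rfl

lemma w2_comp {σ : Equiv.Perm (Fin 4)} (hσ : σ ∈ D) (k : Fin 3) :
    ∃ l, w2 k ∘ σ = w2 l := by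
  set m := w2 k with hm
  have hP : m 0 = m 1 ∧ m 2 = m 3 ∧ m 0 + m 2 = 0 := (P2_iff m).mp ⟨k, rfl⟩
  rw [show (∃ l, m ∘ σ = w2 l) ↔ _ from P2_iff (m ∘ σ)]
  obtain ⟨e1, e2, e3⟩ := hP
  have key : ∀ i j : Fin 4, i = 0 ∨ i = 1 → j = 0 ∨ j = 1 → m i = m j := by
    rintro i j (rfl | rfl) (rfl | rfl) <;> simp [e1]
  have key2 : ∀ i j : Fin 4, i = 2 ∨ i = 3 → j = 2 ∨ j = 3 → m i = m j := by
    rintro i j (rfl | rfl) (rfl | rfl) <;> simp [e2]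
  rcases D_blocks hσ with ⟨h1, h2⟩ | ⟨h1, h2⟩
  · have m0 : σ 0 = 0 ∨ σ 0 = 1 := mem_pair_01 (h1 ▸ Set.mem_insert _ _)
    have m1 : σ 1 = 0 ∨ σ 1 = 1 := mem_pair_01 (h1 ▸ Set.mem_insert_of_mem _ rfl)
    have m2 : σ 2 = 2 ∨ σ 2 = 3 := mem_pair_23 (h2 ▸ Set.mem_insert _ _)
    have m3 : σ 3 = 2 ∨ σ 3 = 3 := mem_pair_23 (h2 ▸ Set.mem_insert_of_mem _ rfl)
    refine ⟨key _ _ m0 m1, key2 _ _ m2 m3, ?_⟩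
    have a0 : m (σ 0) = m 0 := key _ _ m0 (Or.inl rfl)
    have a2 : m (σ 2) = m 2 := key2 _ _ m2 (Or.inl rfl)
    show m (σ 0) + m (σ 2) = 0
    rw [a0, a2, e3]
  · have m0 : σ 0 = 2 ∨ σ 0 = 3 := mem_pair_23 (h1 ▸ Set.mem_insert _ _)
    have m1 : σ 1 = 2 ∨ σ 1 = 3 := mem_pair_23 (h1 ▸ Set.mem_insert_of_mem _ rfl)
    have m2 : σ 2 = 0 ∨ σ 2 = 1 := mem_pair_01 (h2 ▸ Set.mem_insert _ _)
    have m3 : σ 3 = 0 ∨ σ 3 = 1 := mem_pair_01 (h2 ▸ Set.mem_insert_of_mem _ rfl)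
    refine ⟨key2 _ _ m0 m1, key _ _ m2 m3, ?_⟩
    have a0 : m (σ 0) = m 2 := key2 _ _ m0 (Or.inl rfl)
    have a2 : m (σ 2) = m 0 := key _ _ m2 (Or.inl rfl)
    show m (σ 0) + m (σ 2) = 0
    rw [a0, a2, add_comm, e3]

lemma w3_comp {σ : Equiv.Perm (Fin 4)} (hσ : σ ∈ D) (x y : Fin 3) :
    ∃ x' y', w3 x y ∘ σ = w3 x' y' := by
  set m := w3 x y with hm
  have hP : m 0 + m 1 = 0 ∧ m 2 + m 3 = 0 := (P3_iff m).mp ⟨x, y, rfl⟩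
  rw [show (∃ x' y', m ∘ σ = w3 x' y') ↔ _ from P3_iff (m ∘ σ)]
  obtain ⟨e1, e2⟩ := hP
  have key : ∀ i j : Fin 4, i ≠ j → i = 0 ∨ i = 1 → j = 0 ∨ j = 1 → m i + m j = 0 := by
    rintro i j hne (rfl | rfl) (rfl | rfl) <;>
      first | exact absurd rfl hne | exact e1 | (rw [add_comm]; exact e1)
  have key2 : ∀ i j : Fin 4, i ≠ j → i = 2 ∨ i = 3 → j = 2 ∨ j = 3 → m i + m j = 0 := by
    rintro i j hne (rfl | rfl) (rfl | rfl) <;>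
      first | exact absurd rfl hne | exact e2 | (rw [add_comm]; exact e2)
  have hne01 : σ 0 ≠ σ 1 := fun h => absurd (σ.injective h) (by decide)
  have hne23 : σ 2 ≠ σ 3 := fun h => absurd (σ.injective h) (by decide)
  rcases D_blocks hσ with ⟨h1, h2⟩ | ⟨h1, h2⟩
  · have m0 : σ 0 = 0 ∨ σ 0 = 1 := mem_pair_01 (h1 ▸ Set.mem_insert _ _)
    have m1 : σ 1 = 0 ∨ σ 1 = 1 := mem_pair_01 (h1 ▸ Set.mem_insert_of_mem _ rfl)
    have m2 : σ 2 = 2 ∨ σ 2 = 3 := mem_pair_23 (h2 ▸ Set.mem_insert _ _)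
    have m3 : σ 3 = 2 ∨ σ 3 = 3 := mem_pair_23 (h2 ▸ Set.mem_insert_of_mem _ rfl)
    exact ⟨key _ _ hne01 m0 m1, key2 _ _ hne23 m2 m3⟩
  · have m0 : σ 0 = 2 ∨ σ 0 = 3 := mem_pair_23 (h1 ▸ Set.mem_insert _ _)
    have m1 : σ 1 = 2 ∨ σ 1 = 3 := mem_pair_23 (h1 ▸ Set.mem_insert_of_mem _ rfl)
    have m2 : σ 2 = 0 ∨ σ 2 = 1 := mem_pair_01 (h2 ▸ Set.mem_insert _ _)
    have m3 : σ 3 = 0 ∨ σ 3 = 1 := mem_pair_01 (h2 ▸ Set.mem_insert_of_mem _ rfl)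
    exact ⟨key2 _ _ hne01 m0 m1, key _ _ hne23 m2 m3⟩

end Ex14

namespace Ex14

def s01 : Equiv.Perm (Fin 4) := Equiv.swap 0 1
def s23 : Equiv.Perm (Fin 4) := Equiv.swap 2 3
def t2 : Equiv.Perm (Fin 4) := Equiv.swap 0 2 * Equiv.swap 1 3

lemma magic1 : ∀ n : V, (n + n ∘ ⇑s01 + (n + n ∘ ⇑s01) ∘ ⇑s23) +
    (n + n ∘ ⇑s01 + (n + n ∘ ⇑s01) ∘ ⇑s23) ∘ ⇑t2 = w1 (-(n 0 + n 1 + (n 2 + n 3))) := by decide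
lemma magic2 : ∀ n : V, (n + n ∘ ⇑s01 + (n + n ∘ ⇑s01) ∘ ⇑s23) +
    -((n + n ∘ ⇑s01 + (n + n ∘ ⇑s01) ∘ ⇑s23) ∘ ⇑t2) = w2 (n 2 + n 3 - (n 0 + n 1)) := by decide
lemma magic3 : ∀ n : V, n ≠ 0 → n 0 + n 1 + (n 2 + n 3) = 0 →
    n 2 + n 3 - (n 0 + n 1) = 0 → ∃ x y, ¬(x = 0 ∧ y = 0) ∧ n = w3 x y := by decide
lemma magic4 : ∀ x y : Fin 3, w3 x y + -(w3 x y ∘ ⇑s01) = w3 (x + x) 0 := by decide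
lemma magic5 : ∀ z : Fin 3, w3 z 0 ∘ ⇑t2 = w3 0 z := by decide
lemma magic6 : ∀ x y : Fin 3, w3 x y ∘ ⇑t2 = w3 y x := by decide
lemma htwo : ∀ x : Fin 3, x ≠ 0 → x + x ≠ 0 := by decide

lemma s01_mem : s01 ∈ D := by
  show s01 • _ = _
  rw [Set.smul_set_insert, Set.smul_set_singleton, smul_pair, smul_pair]
  rw [show s01 0 = 1 from by decide, show s01 1 = 0 from by decide,
    show s01 2 = 2 from by decide, show s01 3 = 3 from by decide,
    Set.pair_comm (1 : Fin 4) 0]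

lemma s23_mem : s23 ∈ D := by
  show s23 • _ = _
  rw [Set.smul_set_insert, Set.smul_set_singleton, smul_pair, smul_pair]
  rw [show s23 0 = 0 from by decide, show s23 1 = 1 from by decide,
    show s23 2 = 3 from by decide, show s23 3 = 2 from by decide,
    Set.pair_comm (3 : Fin 4) 2]

lemma t2_mem : t2 ∈ D := by
  show t2 • _ = _
  rw [Set.smul_set_insert, Set.smul_set_singleton, smul_pair, smul_pair]
  rw [show t2 0 = 2 from by decide, show t2 1 = 3 from by decide,
    show t2 2 = 0 from by decide, show t2 3 = 1 from by decide,
    Set.pair_comm ({2, 3} : Set (Fin 4)) {0, 1}]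

lemma Pi'_mem_G {σ : Equiv.Perm (Fin 4)} (hσ : σ ∈ D) : Pi' σ ∈ G := by
  rw [memG_iff]
  exact ⟨0, σ, hσ, by rw [T_zero, one_mul]⟩

lemma K_add {K : Subgroup (Equiv.Perm V)} {a b : V} (ha : T a ∈ K) (hb : T b ∈ K) :
    T (a + b) ∈ K := by
  rw [← T_mul]; exact mul_mem ha hb

lemma K_neg {K : Subgroup (Equiv.Perm V)} {a : V} (ha : T a ∈ K) : T (-a) ∈ K := by
  rw [← T_inv]; exact inv_mem ha

lemma conjK {K : Subgroup (Equiv.Perm V)} (hK : QP.IsNormalIn K G) {m : V}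
    (hm : T m ∈ K) {σ : Equiv.Perm (Fin 4)} (hσ : σ ∈ D) : T (m ∘ ⇑σ) ∈ K := by
  have h := hK.2 (Pi' σ⁻¹) (Pi'_mem_G (inv_mem hσ)) (T m) hm
  have e : Pi' σ⁻¹ * T m * (Pi' σ⁻¹)⁻¹ = T (m ∘ ⇑(σ⁻¹).symm) := by
    have h2 := conj_T 0 m σ⁻¹
    rwa [T_zero, one_mul] at h2
  have e2 : ⇑(σ⁻¹).symm = ⇑σ := rfl
  rw [e, e2] at h
  exact h

lemma T_ne_one {a : V} (ha : a ≠ 0) : T a ≠ 1 := by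
  intro h
  rw [← T_zero] at h
  exact ha (T_inj h)

lemma exists_ne_one {X : Type*} [Group X] {K : Subgroup X} (h : K ≠ ⊥) : ∃ g ∈ K, g ≠ 1 := by
  by_contra hc
  push_neg at hc
  exact h ((Subgroup.eq_bot_iff_forall K).mpr hc)

lemma M₁_le {K : Subgroup (Equiv.Perm V)} {k : Fin 3} (hk : k ≠ 0)
    (h : T (w1 k) ∈ K) : M₁ ≤ K := by
  intro g hg
  obtain ⟨l, rfl⟩ := (memM₁ g).mp hg
  obtain ⟨p, hp⟩ := w1_gen k hk l
  have h2 := pow_mem h p.val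
  rwa [T_pow, hp] at h2

lemma M₂_le {K : Subgroup (Equiv.Perm V)} {k : Fin 3} (hk : k ≠ 0)
    (h : T (w2 k) ∈ K) : M₂ ≤ K := by
  intro g hg
  obtain ⟨l, rfl⟩ := (memM₂ g).mp hg
  obtain ⟨p, hp⟩ := w2_gen k hk l
  have h2 := pow_mem h p.val
  rwa [T_pow, hp] at h2

lemma M₃_le {K : Subgroup (Equiv.Perm V)} {z : Fin 3} (hz : z ≠ 0)
    (h1 : T (w3 z 0) ∈ K) (h2 : T (w3 0 z) ∈ K) : M₃ ≤ K := by
  intro g hg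
  obtain ⟨x, y, rfl⟩ := (memM₃ g).mp hg
  obtain ⟨p, q, hpq⟩ := w3_gen z hz x y
  have h3 := mul_mem (pow_mem h1 p.val) (pow_mem h2 q.val)
  rwa [T_pow, T_pow, T_mul, hpq] at h3

lemma M₁_ne_bot : M₁ ≠ ⊥ := by
  intro h
  have h1 : T (w1 1) ∈ M₁ := (memM₁ _).mpr ⟨1, rfl⟩
  rw [h, Subgroup.mem_bot] at h1
  exact T_ne_one (by decide) h1

lemma M₂_ne_bot : M₂ ≠ ⊥ := by
  intro h
  have h1 : T (w2 1) ∈ M₂ := (memM₂ _).mpr ⟨1, rfl⟩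
  rw [h, Subgroup.mem_bot] at h1
  exact T_ne_one (by decide) h1

lemma M₃_ne_bot : M₃ ≠ ⊥ := by
  intro h
  have h1 : T (w3 1 0) ∈ M₃ := (memM₃ _).mpr ⟨1, 0, rfl⟩
  rw [h, Subgroup.mem_bot] at h1
  exact T_ne_one (by decide) h1

lemma norm₁ : QP.IsNormalIn M₁ G := by
  constructor
  · intro g hg
    obtain ⟨k, rfl⟩ := (memM₁ g).mp hg
    exact T_mem_G _
  · intro g hg x hx
    obtain ⟨n, σ, hσ, rfl⟩ := (memG_iff g).mp hg
    obtain ⟨k, rfl⟩ := (memM₁ x).mp hx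
    rw [conj_T]
    exact (memM₁ _).mpr ⟨k, by rw [show w1 k ∘ ⇑σ.symm = w1 k from rfl]⟩

lemma symm_mem_D {σ : Equiv.Perm (Fin 4)} (hσ : σ ∈ D) : σ.symm ∈ D := inv_mem hσ

lemma norm₂ : QP.IsNormalIn M₂ G := by
  constructor
  · intro g hg
    obtain ⟨k, rfl⟩ := (memM₂ g).mp hg
    exact T_mem_G _
  · intro g hg x hx
    obtain ⟨n, σ, hσ, rfl⟩ := (memG_iff g).mp hg
    obtain ⟨k, rfl⟩ := (memM₂ x).mp hx
    rw [conj_T]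
    obtain ⟨l, hl⟩ := w2_comp (symm_mem_D hσ) k
    exact (memM₂ _).mpr ⟨l, by rw [hl]⟩

lemma norm₃ : QP.IsNormalIn M₃ G := by
  constructor
  · intro g hg
    obtain ⟨x, y, rfl⟩ := (memM₃ g).mp hg
    exact T_mem_G _
  · intro g hg x hx
    obtain ⟨n, σ, hσ, rfl⟩ := (memG_iff g).mp hg
    obtain ⟨a, b, rfl⟩ := (memM₃ x).mp hx
    rw [conj_T]
    obtain ⟨a', b', hl⟩ := w3_comp (symm_mem_D hσ) a b
    exact (memM₃ _).mpr ⟨a', b', by rw [hl]⟩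

lemma min₁ : ∀ K : Subgroup (Equiv.Perm V),
    QP.IsNormalIn K G → K ≠ ⊥ → K ≤ M₁ → K = M₁ := by
  intro K _ hne hle
  obtain ⟨g, hgK, hg1⟩ := exists_ne_one hne
  obtain ⟨k, rfl⟩ := (memM₁ g).mp (hle hgK)
  have hk : k ≠ 0 := by
    intro h
    exact hg1 (by rw [h, w1_zero, T_zero])
  exact le_antisymm hle (M₁_le hk hgK)

lemma min₂ : ∀ K : Subgroup (Equiv.Perm V),
    QP.IsNormalIn K G → K ≠ ⊥ → K ≤ M₂ → K = M₂ := by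
  intro K _ hne hle
  obtain ⟨g, hgK, hg1⟩ := exists_ne_one hne
  obtain ⟨k, rfl⟩ := (memM₂ g).mp (hle hgK)
  have hk : k ≠ 0 := by
    intro h
    exact hg1 (by rw [h, w2_zero, T_zero])
  exact le_antisymm hle (M₂_le hk hgK)

lemma M₃_le_of_w3 {K : Subgroup (Equiv.Perm V)} (hK : QP.IsNormalIn K G)
    {x y : Fin 3} (hxy : ¬(x = 0 ∧ y = 0)) (hg : T (w3 x y) ∈ K) : M₃ ≤ K := by
  by_cases hx : x = 0
  · subst hx
    have hy : y ≠ 0 := fun h => hxy ⟨rfl, h⟩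
    have h1 : T (w3 0 y ∘ ⇑t2) ∈ K := conjK hK hg t2_mem
    rw [magic6] at h1
    exact M₃_le hy h1 hg
  · have h1 : T (w3 x y + -(w3 x y ∘ ⇑s01)) ∈ K :=
      K_add hg (K_neg (conjK hK hg s01_mem))
    rw [magic4] at h1
    have h2 : T (w3 (x + x) 0 ∘ ⇑t2) ∈ K := conjK hK h1 t2_mem
    rw [magic5] at h2
    exact M₃_le (htwo x hx) h1 h2

lemma min₃ : ∀ K : Subgroup (Equiv.Perm V),
    QP.IsNormalIn K G → K ≠ ⊥ → K ≤ M₃ → K = M₃ := by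
  intro K hK hne hle
  obtain ⟨g, hgK, hg1⟩ := exists_ne_one hne
  obtain ⟨x, y, rfl⟩ := (memM₃ g).mp (hle hgK)
  have hxy : ¬(x = 0 ∧ y = 0) := by
    rintro ⟨rfl, rfl⟩
    exact hg1 (by rw [w3_zero, T_zero])
  exact le_antisymm hle (M₃_le_of_w3 hK hxy hgK)

end Ex14

namespace Ex14

def TransSub : Subgroup (Equiv.Perm V) where
  carrier := {g | ∃ n, g = T n}
  one_mem' := ⟨0, T_zero.symm⟩
  mul_mem' := by rintro a b ⟨n, rfl⟩ ⟨m, rfl⟩; exact ⟨n + m, T_mul n m⟩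
  inv_mem' := by rintro a ⟨n, rfl⟩; exact ⟨-n, T_inv n⟩

lemma mem_TransSub {g : Equiv.Perm V} : g ∈ TransSub ↔ ∃ n, g = T n := Iff.rfl

lemma comm_elem (n m : V) (σ : Equiv.Perm (Fin 4)) :
    (T n * Pi' σ)⁻¹ * (T m * (T n * Pi' σ) * (T m)⁻¹) = T (m ∘ ⇑σ - m) := by
  rw [mul_inv_rev, Pi'_inv, T_inv, T_inv]
  have e : Equiv.symm σ⁻¹ = σ := Equiv.symm_symm σ
  apply Equiv.ext; intro v; funext i
  simp [T, Pi', Function.comp, Equiv.Perm.mul_apply, e]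
  abel

lemma ne_bot_of_mem {K : Subgroup (Equiv.Perm V)} {x : Equiv.Perm V}
    (hx : x ∈ K) (hx1 : x ≠ 1) : K ≠ ⊥ := by
  intro h
  rw [h, Subgroup.mem_bot] at hx
  exact hx1 hx

lemma K_trans {K : Subgroup (Equiv.Perm V)} (hK : QP.IsMinimalNormalIn K G) :
    K ≤ TransSub := by
  obtain ⟨⟨hle, hconj⟩, hne, hmin⟩ := hK
  have hnormal : QP.IsNormalIn (K ⊓ TransSub) G := by
    constructor
    · exact le_trans inf_le_left hle
    · rintro g hg x ⟨hxK, m, rfl⟩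
      refine ⟨hconj g hg _ hxK, ?_⟩
      obtain ⟨nn, σ, hσ, rfl⟩ := (memG_iff g).mp hg
      rw [conj_T]
      exact ⟨_, rfl⟩
  have hnb : K ⊓ TransSub ≠ ⊥ := by
    obtain ⟨g, hgK, hg1⟩ := exists_ne_one hne
    obtain ⟨n, σ, hσ, rfl⟩ := (memG_iff _).mp (hle hgK)
    by_cases hσ1 : σ = 1
    · subst hσ1
      rw [Pi'_one, mul_one] at hgK hg1
      exact ne_bot_of_mem (Subgroup.mem_inf.mpr ⟨hgK, _, rfl⟩) hg1
    · have hex : ∃ i, σ i ≠ i := by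
        by_contra hc
        push_neg at hc
        exact hσ1 (Equiv.ext hc)
      obtain ⟨i, hi⟩ := hex
      set m : V := fun j => if j = σ i then 1 else 0 with hm
      have helem : T (m ∘ ⇑σ - m) ∈ K := by
        rw [← comm_elem n m σ]
        exact mul_mem (inv_mem hgK) (hconj (T m) (T_mem_G m) _ hgK)
      have hne0 : m ∘ ⇑σ - m ≠ 0 := by
        intro h0
        have h1 := congrFun h0 i
        have hii : ¬ i = σ i := fun h => hi h.symm
        simp [hm, hii] at h1
      exact ne_bot_of_mem (Subgroup.mem_inf.mpr ⟨helem, _, rfl⟩) (T_ne_one hne0)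
  have heq := hmin (K ⊓ TransSub) hnormal hnb inf_le_left
  intro x hx
  rw [← heq] at hx
  exact hx.2

lemma classify : ∀ K : Subgroup (Equiv.Perm V),
    QP.IsMinimalNormalIn K G → K = M₁ ∨ K = M₂ ∨ K = M₃ := by
  intro K hK
  have hTS := K_trans hK
  obtain ⟨⟨hle, hconj⟩, hne, hmin⟩ := hK
  have hKnorm : QP.IsNormalIn K G := ⟨hle, hconj⟩
  obtain ⟨g, hgK, hg1⟩ := exists_ne_one hne
  obtain ⟨n, rfl⟩ := hTS hgK
  have hn0 : n ≠ 0 := fun h => hg1 (by rw [h, T_zero])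
  have hb : T (n + n ∘ ⇑s01) ∈ K := K_add hgK (conjK hKnorm hgK s01_mem)
  have hc : T (n + n ∘ ⇑s01 + (n + n ∘ ⇑s01) ∘ ⇑s23) ∈ K :=
    K_add hb (conjK hKnorm hb s23_mem)
  have hd : T (w1 (-(n 0 + n 1 + (n 2 + n 3)))) ∈ K := by
    rw [← magic1 n]
    exact K_add hc (conjK hKnorm hc t2_mem)
  have he : T (w2 (n 2 + n 3 - (n 0 + n 1))) ∈ K := by
    rw [← magic2 n]
    exact K_add hc (K_neg (conjK hKnorm hc t2_mem))
  by_cases h1 : n 0 + n 1 + (n 2 + n 3) = 0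
  · by_cases h2 : n 2 + n 3 - (n 0 + n 1) = 0
    · obtain ⟨x, y, hxy, rfl⟩ := magic3 n hn0 h1 h2
      exact Or.inr (Or.inr (hmin M₃ norm₃ M₃_ne_bot (M₃_le_of_w3 hKnorm hxy hgK)).symm)
    · exact Or.inr (Or.inl (hmin M₂ norm₂ M₂_ne_bot (M₂_le h2 he)).symm)
  · have h1' : -(n 0 + n 1 + (n 2 + n 3)) ≠ 0 := neg_ne_zero.mpr h1
    exact Or.inl (hmin M₁ norm₁ M₁_ne_bot (M₁_le h1' hd)).symm

lemma M₁_not_trans : ¬ QP.IsTransitivePerm M₁ := by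
  intro h
  obtain ⟨g, hg, hgeq⟩ := h 0 ![1, 0, 0, 0]
  obtain ⟨k, rfl⟩ := (memM₁ g).mp hg
  have hne : ∀ k : Fin 3, (0 : V) + w1 k ≠ ![1, 0, 0, 0] := by decide
  exact hne k hgeq

lemma not_quasi : ¬ QP.IsQuasiprimitivePerm G := by
  rintro ⟨_, hq⟩
  exact M₁_not_trans (hq M₁ norm₁ M₁_ne_bot)

lemma M₁_ne_M₂ : M₁ ≠ M₂ := by
  intro h
  have h1 : T (w1 1) ∈ M₂ := h ▸ ((memM₁ _).mpr ⟨1, rfl⟩)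
  obtain ⟨k, hk⟩ := (memM₂ _).mp h1
  exact (show ∀ k : Fin 3, w1 1 ≠ w2 k by decide) k (T_inj hk)

lemma M₁_ne_M₃ : M₁ ≠ M₃ := by
  intro h
  have h1 : T (w1 1) ∈ M₃ := h ▸ ((memM₁ _).mpr ⟨1, rfl⟩)
  obtain ⟨x, y, hk⟩ := (memM₃ _).mp h1
  exact (show ∀ x y : Fin 3, w1 1 ≠ w3 x y by decide) x y (T_inj hk)

lemma M₂_ne_M₃ : M₂ ≠ M₃ := by
  intro h
  have h1 : T (w2 1) ∈ M₃ := h ▸ ((memM₂ _).mpr ⟨1, rfl⟩)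
  obtain ⟨x, y, hk⟩ := (memM₃ _).mp h1
  exact (show ∀ x y : Fin 3, w2 1 ≠ w3 x y by decide) x y (T_inj hk)

end Ex14

namespace Ex14

def Fib (i : Fin 4) (γ : Fin 3) : Set V := {v | v i = γ}

lemma Fib_mem (i : Fin 4) (γ : Fin 3) : Fib i γ ∈ coordPart i := ⟨γ, rfl⟩

lemma fin3_succ_ne : ∀ δ : Fin 3, δ + 1 ≠ δ := by decide

lemma smul_Fib (n : V) (σ : Equiv.Perm (Fin 4)) (i : Fin 4) (γ : Fin 3) :
    (T n * Pi' σ) • Fib i γ = Fib (σ i) (γ + n (σ i)) := by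
  ext w
  rw [Set.mem_smul_set_iff_inv_smul_mem]
  have e : ((T n * Pi' σ)⁻¹ • w) i = w (σ i) + -(n (σ i)) := by
    rw [mul_inv_rev, Pi'_inv, T_inv]
    rfl
  show ((T n * Pi' σ)⁻¹ • w) i = γ ↔ w (σ i) = γ + n (σ i)
  rw [e, ← sub_eq_add_neg, sub_eq_iff_eq_add]

lemma smul_Fib_T (n : V) (i : Fin 4) (γ : Fin 3) :
    T n • Fib i γ = Fib i (γ + n i) := by
  have h := smul_Fib n 1 i γ
  rw [Pi'_one, mul_one] at h
  simpa using h

lemma Tstab (n : V) (i : Fin 4) : T n • coordPart i = coordPart i := by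
  ext B
  rw [Set.mem_smul_set]
  constructor
  · rintro ⟨B0, ⟨γ, rfl⟩, rfl⟩
    exact ⟨γ + n i, by rw [show ({v : V | v i = γ} : Set V) = Fib i γ from rfl, smul_Fib_T]; rfl⟩
  · rintro ⟨γ, rfl⟩
    refine ⟨Fib i (γ - n i), ⟨γ - n i, rfl⟩, ?_⟩
    rw [smul_Fib_T]
    have : γ - n i + n i = γ := by abel
    rw [this]
    rfl

lemma sigma_fix {n : V} {σ : Equiv.Perm (Fin 4)} {i : Fin 4}
    (h : (T n * Pi' σ) • coordPart i = coordPart i) : σ i = i := by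
  have h0 : (T n * Pi' σ) • Fib i 0 ∈ coordPart i := by
    rw [← h]
    exact Set.smul_mem_smul_set (Fib_mem i 0)
  rw [smul_Fib] at h0
  obtain ⟨δ, hδ⟩ := h0
  by_contra hne
  set w : V := fun k => if k = i then δ + 1 else 0 + n (σ i) with hw
  have hwL : w ∈ Fib (σ i) (0 + n (σ i)) := by
    show w (σ i) = _
    simp [hw, hne]
  rw [hδ] at hwL
  have hwi : w i = δ := hwL
  simp [hw] at hwi

lemma comp_elem {i : Fin 4} {x : Equiv.Perm ↥(coordPart i)}
    (hx : x ∈ QP.component G (coordPart i)) :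
    ∃ k : Fin 3, ∀ (b : ↥(coordPart i)) (γ : Fin 3),
      (b : Set V) = Fib i γ → ((x b : ↥(coordPart i)) : Set V) = Fib i (γ + k) := by
  obtain ⟨gg, hgg, rfl⟩ := Subgroup.mem_map.mp hx
  have hG : (↑gg : Equiv.Perm V) ∈ G := hgg
  obtain ⟨n, σ, hσ, hval⟩ := (memG_iff _).mp hG
  have hstab : (↑gg : Equiv.Perm V) • coordPart i = coordPart i :=
    MulAction.mem_stabilizer_iff.mp gg.2
  rw [hval] at hstab
  have hfix : σ i = i := sigma_fix hstab
  refine ⟨n i, ?_⟩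
  intro b γ hb
  show (↑gg : Equiv.Perm V) • (b : Set V) = Fib i (γ + n i)
  rw [hb, hval, smul_Fib, hfix]

lemma fin3_gen : ∀ k : Fin 3, k ≠ 0 → ∀ γ δ : Fin 3,
    γ = δ ∨ γ + k = δ ∨ γ + k + k = δ := by decide

lemma comp_quasi (i : Fin 4) : QP.IsQuasiprimitivePerm (QP.component G (coordPart i)) := by
  constructor
  · -- transitivity
    intro b1 b2
    obtain ⟨γ, hγ⟩ := b1.2
    obtain ⟨δ, hδ⟩ := b2.2
    have hγ' : (b1 : Set V) = Fib i γ := hγ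
    have hδ' : (b2 : Set V) = Fib i δ := hδ
    have hstab : T (w1 (δ - γ)) ∈ QP.partStab (coordPart i) :=
      MulAction.mem_stabilizer_iff.mpr (Tstab _ i)
    have hmem : (⟨T (w1 (δ - γ)), hstab⟩ : ↥(QP.partStab (coordPart i))) ∈
        G.subgroupOf (QP.partStab (coordPart i)) := by
      rw [Subgroup.mem_subgroupOf]
      exact T_mem_G _
    refine ⟨QP.componentHom (coordPart i) ⟨T (w1 (δ - γ)), hstab⟩,
      Subgroup.mem_map_of_mem _ hmem, ?_⟩
    apply Subtype.ext
    show T (w1 (δ - γ)) • (b1 : Set V) = (b2 : Set V)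
    rw [hγ', hδ', smul_Fib_T]
    have : γ + w1 (δ - γ) i = δ := by
      show γ + (δ - γ) = δ
      abel
    rw [this]
  · -- every nontrivial normal subgroup is transitive
    rintro N ⟨hNle, _⟩ hNbot
    obtain ⟨x, hxN, hx1⟩ := exists_ne_one hNbot
    obtain ⟨k, pr⟩ := comp_elem (hNle hxN)
    have hk : k ≠ 0 := by
      intro h0
      subst h0
      apply hx1
      apply Equiv.ext
      intro b
      obtain ⟨γ, hγ⟩ := b.2
      have hγ' : (b : Set V) = Fib i γ := hγ
      apply Subtype.ext
      have e := pr b γ hγ'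
      rw [add_zero] at e
      show ((x b : ↥(coordPart i)) : Set V) = (b : Set V)
      rw [e, hγ']
    intro b1 b2
    obtain ⟨γ, hγ⟩ := b1.2
    obtain ⟨δ, hδ⟩ := b2.2
    have hγ' : (b1 : Set V) = Fib i γ := hγ
    have hδ' : (b2 : Set V) = Fib i δ := hδ
    rcases fin3_gen k hk γ δ with h | h | h
    · refine ⟨1, one_mem N, Subtype.ext ?_⟩
      show ((b1 : ↥(coordPart i)) : Set V) = (b2 : Set V)
      rw [hγ', hδ', h]
    · refine ⟨x, hxN, Subtype.ext ?_⟩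
      rw [pr b1 γ hγ', hδ', h]
    · refine ⟨x * x, mul_mem hxN hxN, Subtype.ext ?_⟩
      have e1 := pr b1 γ hγ'
      have e2 := pr (x b1) (γ + k) e1
      show ((x (x b1) : ↥(coordPart i)) : Set V) = (b2 : Set V)
      rw [e2, hδ', h]

end Ex14

/-- With H = ⟨(1 2 3)⟩ and G = H wr D₈ in product action on {1,2,3}⁴,
the group G has exactly the three minimal normal subgroups
M₁ = {(x,x,x,x)}, M₂ = {(x,x,x²,x²)}, M₃ = {(x,x²,y,y²)}; in particular G is not
quasiprimitive, even though each component of G (on the natural coordinate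
partitions) is quasiprimitive. -/
theorem wreath_D8_three_minimal_normal_subgroups :
    QP.IsMinimalNormalIn Ex14.M₁ Ex14.G ∧
    QP.IsMinimalNormalIn Ex14.M₂ Ex14.G ∧
    QP.IsMinimalNormalIn Ex14.M₃ Ex14.G ∧
    Ex14.M₁ ≠ Ex14.M₂ ∧ Ex14.M₁ ≠ Ex14.M₃ ∧ Ex14.M₂ ≠ Ex14.M₃ ∧
    (∀ K : Subgroup (Equiv.Perm (Fin 4 → Fin 3)),
      QP.IsMinimalNormalIn K Ex14.G → K = Ex14.M₁ ∨ K = Ex14.M₂ ∨ K = Ex14.M₃) ∧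
    ¬ QP.IsQuasiprimitivePerm Ex14.G ∧
    (∀ i : Fin 4, QP.IsQuasiprimitivePerm (QP.component Ex14.G (Ex14.coordPart i))) := by
  exact ⟨⟨Ex14.norm₁, Ex14.M₁_ne_bot, Ex14.min₁⟩, ⟨Ex14.norm₂, Ex14.M₂_ne_bot, Ex14.min₂⟩,
    ⟨Ex14.norm₃, Ex14.M₃_ne_bot, Ex14.min₃⟩, Ex14.M₁_ne_M₂, Ex14.M₁_ne_M₃, Ex14.M₂_ne_M₃,
    Ex14.classify, Ex14.not_quasi, Ex14.comp_quasi⟩
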